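/- For κ > 0 and s, t ∈ ℝ with s ≠ t, let q_κ^t(u) = (√κ/(2π)^{1/4})·exp(−κ²(u−t)²/4) and (∂⁻¹q_κ^t)(x) = (1/2)∫_{−∞}^x q_κ^t − (1/2)∫_x^∞ q_κ^t. Then lim_{κ→∞} (κ/√(2π)) ∫_ℝ q_κ^s(x) (∂⁻¹q_κ^t)(x) dx = 1 if s > t, and = −1 if s < t. -/

import Mathlib

open MeasureTheory Real Filter

noncomputable def qGauss (κ x : ℝ) (u : ℝ) : ℝ :=
  Real.sqrt κ / (2 * Real.pi) ^ ((1 : ℝ) / 4) * Real.exp (-(κ ^ 2) * (u - x) ^ 2 / 4)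

noncomputable def symmAntideriv (f : ℝ → ℝ) (x : ℝ) : ℝ :=
  (1 / 2) * (∫ s in Set.Iic x, f s) - (1 / 2) * ∫ s in Set.Ici x, f s

namespace QGaussAux

open Set

lemma exp_tail_integral {a : ℝ} (ha : 0 < a) (m : ℝ) :
    ∫ u in Set.Ici m, Real.exp (-(a * u)) = Real.exp (-(a * m)) / a := by
  rw [integral_Ici_eq_integral_Ioi]
  have := integral_comp_mul_left_Ioi (fun y => Real.exp (-y)) m ha
  simp only [smul_eq_mul] at this
  rw [this, integral_exp_neg_Ioi]
  field_simp

lemma gauss_tail {c δ : ℝ} (hc : 0 < c) (hδ : 0 < δ) (t : ℝ) :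
    ∫ u in Set.Ici (t + δ), Real.exp (-c * (u - t) ^ 2)
      ≤ Real.exp (-(c * δ ^ 2)) / (c * δ) := by
  have ha : 0 < c * δ := mul_pos hc hδ
  have hint1 : IntegrableOn (fun u => Real.exp (-c * (u - t) ^ 2)) (Set.Ici (t + δ)) :=
    ((integrable_exp_neg_mul_sq hc).comp_sub_right t).integrableOn
  have heq : ∀ u : ℝ, Real.exp (-(c * δ) * (u - t))
      = Real.exp (c * δ * t) * Real.exp (-(c * δ * u)) := by
    intro u; rw [← Real.exp_add]; ring_nf
  have hint2 : IntegrableOn (fun u => Real.exp (-(c * δ) * (u - t))) (Set.Ici (t + δ)) := by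
    simp only [heq]
    refine Integrable.const_mul ?_ _
    rw [show Integrable (fun u => rexp (-(c * δ * u))) (volume.restrict (Ici (t + δ))) ↔
        IntegrableOn (fun u => rexp (-(c * δ * u))) (Set.Ici (t + δ)) volume from Iff.rfl,
      integrableOn_Ici_iff_integrableOn_Ioi]
    simpa only [neg_mul] using exp_neg_integrableOn_Ioi (t + δ) ha
  calc ∫ u in Set.Ici (t + δ), Real.exp (-c * (u - t) ^ 2)
      ≤ ∫ u in Set.Ici (t + δ), Real.exp (-(c * δ) * (u - t)) := by
        refine setIntegral_mono_on hint1 hint2 measurableSet_Ici ?_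
        intro u hu
        have h1 : δ ≤ u - t := by simp only [Set.mem_Ici] at hu; linarith
        have h0 : (0:ℝ) ≤ u - t := le_trans hδ.le h1
        apply Real.exp_le_exp.mpr
        nlinarith [mul_nonneg (mul_nonneg hc.le h0) (sub_nonneg.mpr h1)]
    _ = Real.exp (-(c * δ ^ 2)) / (c * δ) := by
        simp only [heq]
        rw [integral_const_mul, exp_tail_integral ha (t + δ), mul_div_assoc', ← Real.exp_add]
        congr 2
        ring

lemma qGauss_eq (κ y u : ℝ) :
    qGauss κ y u = Real.sqrt κ / (2 * π) ^ ((1 : ℝ) / 4) * Real.exp (-(κ ^ 2 / 4) * (u - y) ^ 2) := by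
  unfold qGauss
  have : -(κ ^ 2) * (u - y) ^ 2 / 4 = -(κ ^ 2 / 4) * (u - y) ^ 2 := by ring
  rw [this]

lemma qGauss_neg (κ y u : ℝ) : qGauss κ y (-u) = qGauss κ (-y) u := by
  unfold qGauss
  have : -(κ ^ 2) * (-u - y) ^ 2 / 4 = -(κ ^ 2) * (u - -y) ^ 2 / 4 := by ring
  rw [this]

lemma qGauss_nonneg (κ y u : ℝ) : 0 ≤ qGauss κ y u := by
  unfold qGauss; positivity

lemma qGauss_integrable {κ : ℝ} (hκ : 0 < κ) (y : ℝ) : Integrable (qGauss κ y) := by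
  have hc : 0 < κ ^ 2 / 4 := by positivity
  have : qGauss κ y = fun u => Real.sqrt κ / (2 * π) ^ ((1 : ℝ) / 4)
      * Real.exp (-(κ ^ 2 / 4) * (u - y) ^ 2) := funext (qGauss_eq κ y)
  rw [this]
  exact ((integrable_exp_neg_mul_sq hc).comp_sub_right y).const_mul _

lemma qGauss_integral {κ : ℝ} (hκ : 0 < κ) (y : ℝ) :
    ∫ u, qGauss κ y u = Real.sqrt κ / (2 * π) ^ ((1 : ℝ) / 4) * Real.sqrt (π / (κ ^ 2 / 4)) := by
  simp only [qGauss_eq]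
  rw [integral_const_mul, integral_sub_right_eq_self
    (fun u => Real.exp (-(κ ^ 2 / 4) * u ^ 2)) y, integral_gaussian]

lemma sqrt_pi_c {κ : ℝ} (hκ : 0 < κ) : Real.sqrt (π / (κ ^ 2 / 4)) = 2 / κ * Real.sqrt π := by
  have h : π / (κ ^ 2 / 4) = (2 / κ) ^ 2 * π := by field_simp; ring
  rw [h, Real.sqrt_mul (sq_nonneg _), Real.sqrt_sq (by positivity)]

lemma symmAntideriv_qGauss_eq {κ : ℝ} (hκ : 0 < κ) (t x : ℝ) :
    symmAntideriv (qGauss κ t) x = (∫ u, qGauss κ t u) / 2 - ∫ u in Set.Ici x, qGauss κ t u := by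
  have hi := qGauss_integrable hκ t
  have h1 := intervalIntegral.integral_Iic_add_Ioi (b := x) hi.integrableOn hi.integrableOn
  have h2 : ∫ u in Set.Ici x, qGauss κ t u = ∫ u in Set.Ioi x, qGauss κ t u :=
    integral_Ici_eq_integral_Ioi
  unfold symmAntideriv
  rw [h2]; linarith

lemma setIntegral_qGauss_nonneg {κ : ℝ} (t : ℝ) (S : Set ℝ) (hS : MeasurableSet S) :
    0 ≤ ∫ u in S, qGauss κ t u :=
  setIntegral_nonneg hS fun u _ => qGauss_nonneg κ t u

lemma symmAntideriv_qGauss_le {κ : ℝ} (hκ : 0 < κ) (t x : ℝ) :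
    symmAntideriv (qGauss κ t) x ≤ (∫ u, qGauss κ t u) / 2 := by
  rw [symmAntideriv_qGauss_eq hκ t x]
  have := setIntegral_qGauss_nonneg (κ := κ) t (Set.Ici x) measurableSet_Ici
  linarith

lemma symmAntideriv_qGauss_ge {κ : ℝ} (hκ : 0 < κ) (t x : ℝ) :
    -((∫ u, qGauss κ t u) / 2) ≤ symmAntideriv (qGauss κ t) x := by
  rw [symmAntideriv_qGauss_eq hκ t x]
  have h := setIntegral_le_integral (qGauss_integrable hκ t)
    (Filter.Eventually.of_forall fun u => qGauss_nonneg κ t u) (s := Set.Ici x)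
  linarith

lemma symmAntideriv_qGauss_mono {κ : ℝ} (hκ : 0 < κ) (t : ℝ) :
    Monotone (symmAntideriv (qGauss κ t)) := by
  intro x y hxy
  rw [symmAntideriv_qGauss_eq hκ t x, symmAntideriv_qGauss_eq hκ t y]
  have : ∫ u in Set.Ici y, qGauss κ t u ≤ ∫ u in Set.Ici x, qGauss κ t u :=
    setIntegral_mono_set (qGauss_integrable hκ t).integrableOn
      (Filter.Eventually.of_forall fun u => qGauss_nonneg κ t u)
      (HasSubset.Subset.eventuallyLE (Set.Ici_subset_Ici.mpr hxy))
  linarith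

lemma qGauss_mul_symm_integrable {κ : ℝ} (hκ : 0 < κ) (s t : ℝ) :
    Integrable (fun x => qGauss κ s x * symmAntideriv (qGauss κ t) x) := by
  have hmeas : AEStronglyMeasurable (symmAntideriv (qGauss κ t)) volume :=
    ((symmAntideriv_qGauss_mono hκ t).measurable).aestronglyMeasurable
  have hbd : ∃ C, ∀ x, ‖symmAntideriv (qGauss κ t) x‖ ≤ C := by
    refine ⟨(∫ u, qGauss κ t u) / 2, fun x => abs_le.mpr ⟨?_, ?_⟩⟩
    · exact symmAntideriv_qGauss_ge hκ t x
    · exact symmAntideriv_qGauss_le hκ t x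
  have := Integrable.bdd_mul (qGauss_integrable hκ s) hmeas (ae_of_all _ hbd.choose_spec)
  simpa only [mul_comm] using this

lemma alg1 {κ A w p : ℝ} (hκ : 0 < κ) (hw : 0 < w) (hA2 : A ^ 2 * w = κ)
    (hw2 : w ^ 2 = 2 * π) (hp2 : p ^ 2 = π) :
    κ / w * (A * (2 / κ * p) * (A * (2 / κ * p) / 2)) = 1 := by
  field_simp
  linear_combination 2 * A ^ 2 * hp2 - A ^ 2 * hw2 + w * hA2

lemma alg2 {κ A w p δ E : ℝ} (hκ : 0 < κ) (hw : 0 < w) (hδ : 0 < δ)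
    (hA2 : A ^ 2 * w = κ) (hw2 : w ^ 2 = 2 * π) :
    κ / w * (2 * (A * (E / (κ ^ 2 / 4 * δ)) * (A * (2 / κ * p)))) = 8 * p / (π * δ) * E * κ⁻¹ := by
  field_simp
  linear_combination (-8 * A ^ 2 * E * p) * hw2 + (8 * E * p * w) * hA2

lemma per_kappa {s t κ : ℝ} (h : t < s) (hκ : 0 < κ) :
    1 - 8 * Real.sqrt π / (π * ((s - t) / 2)) * κ⁻¹
      ≤ κ / Real.sqrt (2 * π) * ∫ x, qGauss κ s x * symmAntideriv (qGauss κ t) x ∧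
    κ / Real.sqrt (2 * π) * ∫ x, qGauss κ s x * symmAntideriv (qGauss κ t) x ≤ 1 := by
  have hπ : (0:ℝ) < π := Real.pi_pos
  set δ : ℝ := (s - t) / 2 with hδdef
  have hδ : 0 < δ := by rw [hδdef]; linarith
  set m : ℝ := (t + s) / 2 with hmdef
  have hmt : m = t + δ := by rw [hmdef, hδdef]; ring
  set A : ℝ := Real.sqrt κ / (2 * π) ^ ((1:ℝ)/4) with hAdef
  have hA0 : 0 ≤ A := by rw [hAdef]; positivity
  set w : ℝ := Real.sqrt (2 * π) with hwdef
  have hw : 0 < w := Real.sqrt_pos.mpr (by positivity)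
  have hw2 : w ^ 2 = 2 * π := Real.sq_sqrt (by positivity)
  have hr2 : ((2 * π) ^ ((1:ℝ)/4)) ^ 2 = w := by
    rw [hwdef, Real.sqrt_eq_rpow, ← Real.rpow_natCast ((2*π) ^ ((1:ℝ)/4)) 2,
      ← Real.rpow_mul (by positivity)]
    norm_num
  have hA2 : A ^ 2 * w = κ := by
    rw [hAdef, div_pow, Real.sq_sqrt hκ.le, hr2]
    field_simp
  have hc : 0 < κ ^ 2 / 4 := by positivity
  set Q : ℝ := A * (2 / κ * Real.sqrt π) with hQdef
  have hQ0 : 0 ≤ Q := by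
    rw [hQdef]; positivity
  have hQint : ∀ y : ℝ, ∫ u, qGauss κ y u = Q := by
    intro y
    rw [qGauss_integral hκ y, sqrt_pi_c hκ, hQdef, hAdef]
  set E : ℝ := Real.exp (-(κ ^ 2 / 4 * δ ^ 2)) with hEdef
  have hE1 : E ≤ 1 := by
    rw [hEdef]
    have h0 : 0 ≤ κ ^ 2 / 4 * δ ^ 2 := by positivity
    exact Real.exp_le_one_iff.mpr (by linarith)
  set ε : ℝ := A * (E / (κ ^ 2 / 4 * δ)) with hεdef
  have hε0 : 0 ≤ ε := by
    rw [hεdef, hEdef]; positivity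
  -- tail bounds
  have tail_gen : ∀ y : ℝ, ∫ u in Set.Ici (y + δ), qGauss κ y u ≤ ε := by
    intro y
    have hrw : ∀ u, qGauss κ y u = A * Real.exp (-(κ ^ 2 / 4) * (u - y) ^ 2) := by
      intro u; rw [qGauss_eq, hAdef]
    simp only [hrw]
    rw [integral_const_mul, hεdef]
    refine mul_le_mul_of_nonneg_left ?_ hA0
    have := gauss_tail hc hδ y
    rw [hEdef]
    exact this
  have tail_t : ∫ u in Set.Ici m, qGauss κ t u ≤ ε := by
    rw [hmt]; exact tail_gen t
  have tail_s : ∫ u in Set.Iio m, qGauss κ s u ≤ ε := by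
    rw [← integral_Iic_eq_integral_Iio]
    have h1 : ∫ u in Set.Iic m, qGauss κ s u = ∫ u in Set.Iic m, qGauss κ (-(-s)) u := by
      norm_num
    have h2 : ∫ u in Set.Iic m, qGauss κ (-(-s)) u = ∫ u in Set.Ioi (-m), qGauss κ (-s) u := by
      have := integral_comp_neg_Iic m (qGauss κ (-s))
      rw [← this]
      refine setIntegral_congr_fun measurableSet_Iic fun u _ => ?_
      rw [qGauss_neg]
    rw [h1, h2, ← integral_Ici_eq_integral_Ioi]
    have hms : -m = -s + δ := by rw [hmdef, hδdef]; ring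
    rw [hms]
    exact tail_gen (-s)
  -- pointwise bounds on the antiderivative
  have hGle : ∀ x : ℝ, symmAntideriv (qGauss κ t) x ≤ Q / 2 := by
    intro x; have := symmAntideriv_qGauss_le hκ t x; rwa [hQint t] at this
  have hGge : ∀ x : ℝ, -(Q / 2) ≤ symmAntideriv (qGauss κ t) x := by
    intro x; have := symmAntideriv_qGauss_ge hκ t x; rwa [hQint t] at this
  have hGset : ∀ x ∈ Set.Ici m, Q / 2 - ε ≤ symmAntideriv (qGauss κ t) x := by
    intro x hx
    rw [symmAntideriv_qGauss_eq hκ t x, hQint t]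
    have h1 : ∫ u in Set.Ici x, qGauss κ t u ≤ ∫ u in Set.Ici m, qGauss κ t u :=
      setIntegral_mono_set (qGauss_integrable hκ t).integrableOn
        (Filter.Eventually.of_forall fun u => qGauss_nonneg κ t u)
        (HasSubset.Subset.eventuallyLE (Set.Ici_subset_Ici.mpr hx))
    linarith
  have hIint := qGauss_mul_symm_integrable hκ s t
  -- upper bound
  have hub : ∫ x, qGauss κ s x * symmAntideriv (qGauss κ t) x ≤ Q * (Q / 2) := by
    have hmono := integral_mono hIint ((qGauss_integrable hκ s).mul_const (Q / 2))
      (fun x => mul_le_mul_of_nonneg_left (hGle x) (qGauss_nonneg κ s x))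
    rwa [integral_mul_const, hQint s] at hmono
  -- lower bound
  set η : ℝ := ∫ x in Set.Iio m, qGauss κ s x with hηdef
  have hη0 : 0 ≤ η := setIntegral_qGauss_nonneg s _ measurableSet_Iio
  have hηε : η ≤ ε := tail_s
  have hsplitQ : η + ∫ x in Set.Ici m, qGauss κ s x = Q := by
    rw [hηdef, intervalIntegral.integral_Iio_add_Ici (qGauss_integrable hκ s).integrableOn
      (qGauss_integrable hκ s).integrableOn, hQint s]
  have lower1 : η * (-(Q / 2)) ≤ ∫ x in Set.Iio m, qGauss κ s x * symmAntideriv (qGauss κ t) x := by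
    have hmono : ∫ x in Set.Iio m, qGauss κ s x * (-(Q / 2))
        ≤ ∫ x in Set.Iio m, qGauss κ s x * symmAntideriv (qGauss κ t) x :=
      setIntegral_mono_on
        (((qGauss_integrable hκ s).mul_const (-(Q / 2))).integrableOn) hIint.integrableOn
        measurableSet_Iio
        (fun x _ => mul_le_mul_of_nonneg_left (hGge x) (qGauss_nonneg κ s x))
    rwa [integral_mul_const] at hmono
  have lower2 : (∫ x in Set.Ici m, qGauss κ s x) * (Q / 2 - ε)
      ≤ ∫ x in Set.Ici m, qGauss κ s x * symmAntideriv (qGauss κ t) x := by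
    have hmono : ∫ x in Set.Ici m, qGauss κ s x * (Q / 2 - ε)
        ≤ ∫ x in Set.Ici m, qGauss κ s x * symmAntideriv (qGauss κ t) x :=
      setIntegral_mono_on
        (((qGauss_integrable hκ s).mul_const (Q / 2 - ε)).integrableOn) hIint.integrableOn
        measurableSet_Ici
        (fun x hx => mul_le_mul_of_nonneg_left (hGset x hx) (qGauss_nonneg κ s x))
    rwa [integral_mul_const] at hmono
  have hIsplit : ∫ x, qGauss κ s x * symmAntideriv (qGauss κ t) x
      = (∫ x in Set.Iio m, qGauss κ s x * symmAntideriv (qGauss κ t) x)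
        + ∫ x in Set.Ici m, qGauss κ s x * symmAntideriv (qGauss κ t) x :=
    (intervalIntegral.integral_Iio_add_Ici hIint.integrableOn hIint.integrableOn).symm
  have hlb : Q * (Q / 2) - 2 * (ε * Q) ≤ ∫ x, qGauss κ s x * symmAntideriv (qGauss κ t) x := by
    rw [hIsplit]
    have hIci : ∫ x in Set.Ici m, qGauss κ s x = Q - η := by linarith
    rw [hIci] at lower2
    nlinarith [lower1, lower2, hη0, hηε, hQ0, hε0]
  -- conclude
  have hcoef : 0 ≤ κ / w := by positivity
  have heq1 : κ / w * (Q * (Q / 2)) = 1 := by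
    rw [hQdef]
    exact alg1 hκ hw hA2 hw2 (Real.sq_sqrt hπ.le)
  have heq2 : κ / w * (2 * (ε * Q)) = 8 * Real.sqrt π / (π * δ) * E * κ⁻¹ := by
    rw [hεdef, hQdef]
    exact alg2 hκ hw hδ hA2 hw2
  constructor
  · have h1 : κ / w * (Q * (Q / 2) - 2 * (ε * Q))
        ≤ κ / w * ∫ x, qGauss κ s x * symmAntideriv (qGauss κ t) x :=
      mul_le_mul_of_nonneg_left hlb hcoef
    have h2 : κ / w * (Q * (Q / 2) - 2 * (ε * Q))
        = 1 - 8 * Real.sqrt π / (π * δ) * E * κ⁻¹ := by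
      rw [mul_sub, heq1, heq2]
    have h3 : 8 * Real.sqrt π / (π * δ) * E * κ⁻¹ ≤ 8 * Real.sqrt π / (π * δ) * κ⁻¹ := by
      have hcc : 0 ≤ 8 * Real.sqrt π / (π * δ) := by positivity
      have hi : 0 ≤ κ⁻¹ := by positivity
      calc 8 * Real.sqrt π / (π * δ) * E * κ⁻¹
          ≤ 8 * Real.sqrt π / (π * δ) * 1 * κ⁻¹ := by
            apply mul_le_mul_of_nonneg_right _ hi
            exact mul_le_mul_of_nonneg_left hE1 hcc
        _ = 8 * Real.sqrt π / (π * δ) * κ⁻¹ := by ring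
    rw [hwdef] at h1
    linarith
  · have h1 : κ / w * ∫ x, qGauss κ s x * symmAntideriv (qGauss κ t) x
        ≤ κ / w * (Q * (Q / 2)) := mul_le_mul_of_nonneg_left hub hcoef
    rw [heq1] at h1
    rwa [hwdef] at h1

lemma mainA {s t : ℝ} (h : t < s) :
    Tendsto (fun κ : ℝ => κ / Real.sqrt (2 * π) *
      ∫ x : ℝ, qGauss κ s x * symmAntideriv (qGauss κ t) x) atTop (nhds 1) := by
  have hδ : 0 < (s - t) / 2 := by linarith
  set C : ℝ := 8 * Real.sqrt π / (π * ((s - t) / 2)) with hC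
  have hlo : Tendsto (fun κ : ℝ => 1 - C * κ⁻¹) atTop (nhds 1) := by
    have h0 : Tendsto (fun κ : ℝ => C * κ⁻¹) atTop (nhds 0) := by
      simpa using tendsto_inv_atTop_zero.const_mul C
    simpa using tendsto_const_nhds.sub h0
  refine tendsto_of_tendsto_of_tendsto_of_le_of_le' hlo tendsto_const_nhds ?_ ?_
  · filter_upwards [eventually_gt_atTop (0:ℝ)] with κ hκ
    exact (per_kappa h hκ).1
  · filter_upwards [eventually_gt_atTop (0:ℝ)] with κ hκ
    exact (per_kappa h hκ).2

lemma reflect (s t κ : ℝ) :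
    ∫ x : ℝ, qGauss κ s x * symmAntideriv (qGauss κ t) x
      = -∫ x : ℝ, qGauss κ (-s) x * symmAntideriv (qGauss κ (-t)) x := by
  have hG : ∀ x : ℝ, symmAntideriv (qGauss κ t) (-x) = -symmAntideriv (qGauss κ (-t)) x := by
    intro x
    unfold symmAntideriv
    have h1 : ∫ u in Set.Iic (-x), qGauss κ t u = ∫ u in Set.Ici x, qGauss κ (-t) u := by
      rw [← integral_comp_neg_Ioi x (qGauss κ t)]
      rw [show (∫ u in Set.Ioi x, qGauss κ t (-u)) = ∫ u in Set.Ioi x, qGauss κ (-t) u from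
        setIntegral_congr_fun measurableSet_Ioi fun u _ => qGauss_neg κ t u]
      rw [integral_Ici_eq_integral_Ioi]
    have h2 : ∫ u in Set.Ici (-x), qGauss κ t u = ∫ u in Set.Iic x, qGauss κ (-t) u := by
      rw [integral_Ici_eq_integral_Ioi, ← integral_comp_neg_Iic x (qGauss κ t)]
      exact setIntegral_congr_fun measurableSet_Iic fun u _ => qGauss_neg κ t u
    rw [h1, h2]; ring
  have hmain : ∫ x : ℝ, qGauss κ s x * symmAntideriv (qGauss κ t) x
      = ∫ x : ℝ, qGauss κ s (-x) * symmAntideriv (qGauss κ t) (-x) :=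
    (integral_neg_eq_self (fun x => qGauss κ s x * symmAntideriv (qGauss κ t) x) volume).symm
  rw [hmain]
  rw [show (fun x : ℝ => qGauss κ s (-x) * symmAntideriv (qGauss κ t) (-x))
      = fun x : ℝ => -(qGauss κ (-s) x * symmAntideriv (qGauss κ (-t)) x) from
    funext fun x => by rw [qGauss_neg, hG x]; ring]
  rw [integral_neg]

end QGaussAux

theorem qGauss_antideriv_pairing_limit (s t : ℝ) (hst : s ≠ t) :
    (s > t → Tendsto
      (fun κ : ℝ => κ / Real.sqrt (2 * Real.pi) *
        ∫ x : ℝ, qGauss κ s x * symmAntideriv (qGauss κ t) x) atTop (nhds 1)) ∧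
    (s < t → Tendsto
      (fun κ : ℝ => κ / Real.sqrt (2 * Real.pi) *
        ∫ x : ℝ, qGauss κ s x * symmAntideriv (qGauss κ t) x) atTop (nhds (-1))) := by
  constructor
  · intro h
    exact QGaussAux.mainA h
  · intro h
    have hneg : -t < -s := by linarith
    have hT := (QGaussAux.mainA hneg).neg
    refine hT.congr fun κ => ?_
    rw [QGaussAux.reflect s t κ]
    ring
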